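/- arXiv:2202.12173 — 4 statements merged into one kernel-verified Lean document; each statement's English description precedes it below -/
import Mathlib

section
/- For every natural number d ≥ 1, the equation -(k^{d+1})/(d+1) + (k+1)^d = 0 has a unique solution k ≥ 0, and this solution satisfies k ≥ d + 1. -/
lemma cross_lt (d : ℕ) {a b : ℝ} (ha : 0 ≤ a) (hab : a < b) :
    a ^ (d + 1) * (b + 1) ^ d < b ^ (d + 1) * (a + 1) ^ d := by
  have hb : 0 < b := lt_of_le_of_lt ha hab
  have h1 : a * (b + 1) ≤ b * (a + 1) := by nlinarith
  calc a ^ (d + 1) * (b + 1) ^ d = a * (a * (b + 1)) ^ d := by rw [mul_pow]; ring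
    _ ≤ a * (b * (a + 1)) ^ d := by
        refine mul_le_mul_of_nonneg_left ?_ ha
        exact pow_le_pow_left₀ (by positivity) h1 d
    _ < b * (b * (a + 1)) ^ d := by
        refine mul_lt_mul_of_pos_right hab (by positivity)
    _ = b ^ (d + 1) * (a + 1) ^ d := by rw [mul_pow]; ring

lemma eq_form (d : ℕ) {a : ℝ} (h : -(a ^ (d + 1)) / ((d : ℝ) + 1) + (a + 1) ^ d = 0) :
    a ^ (d + 1) = ((d : ℝ) + 1) * (a + 1) ^ d := by
  have hd1 : ((d : ℝ) + 1) ≠ 0 := by positivity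
  field_simp at h
  linarith

lemma uniq (d : ℕ) {a b : ℝ} (ha : 0 ≤ a) (hb : 0 ≤ b)
    (h1 : a ^ (d + 1) = ((d : ℝ) + 1) * (a + 1) ^ d)
    (h2 : b ^ (d + 1) = ((d : ℝ) + 1) * (b + 1) ^ d) : a = b := by
  rcases lt_trichotomy a b with h | h | h
  · have hc := cross_lt d ha h
    rw [h1, h2] at hc
    nlinarith [hc]
  · exact h
  · have hc := cross_lt d hb h
    rw [h1, h2] at hc
    nlinarith [hc]

theorem stmt_6 (d : ℕ) (hd : 1 ≤ d) :
    ∃ k : ℝ, 0 ≤ k ∧ (-(k ^ (d + 1)) / (d + 1) + (k + 1) ^ d = 0) ∧ (d : ℝ) + 1 ≤ k ∧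
      ∀ k' : ℝ, 0 ≤ k' → -(k' ^ (d + 1)) / (d + 1) + (k' + 1) ^ d = 0 → k' = k := by
  have hd1 : (0 : ℝ) < (d : ℝ) + 1 := by positivity
  set f : ℝ → ℝ := fun k => -(k ^ (d + 1)) / ((d : ℝ) + 1) + (k + 1) ^ d with hf
  have hcont : Continuous f := by
    apply Continuous.add
    · exact (continuous_pow (d + 1)).neg.div_const _
    · exact (continuous_id.add continuous_const).pow d
  set M : ℝ := 2 ^ d * ((d : ℝ) + 1) with hM
  have hM1 : (1 : ℝ) ≤ M := by
    have h2 : (1 : ℝ) ≤ 2 ^ d := one_le_pow₀ (by norm_num)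
    nlinarith
  have hle : (d : ℝ) + 1 ≤ M := by
    have h2 : (1 : ℝ) ≤ 2 ^ d := one_le_pow₀ (by norm_num)
    nlinarith
  have hfa : 0 ≤ f ((d : ℝ) + 1) := by
    have key : ((d : ℝ) + 1) ^ d ≤ ((d : ℝ) + 1 + 1) ^ d :=
      pow_le_pow_left₀ (by positivity) (by linarith) d
    simp only [hf]
    rw [pow_succ, neg_div, mul_div_assoc, div_self hd1.ne', mul_one]
    linarith
  have hfb : f M ≤ 0 := by
    have key : (M + 1) ^ d ≤ (2 * M) ^ d :=
      pow_le_pow_left₀ (by positivity) (by linarith) d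
    have e2 : M ^ (d + 1) / ((d : ℝ) + 1) = 2 ^ d * M ^ d := by
      rw [pow_succ, hM]
      field_simp
    have e3 : (2 * M) ^ d = 2 ^ d * M ^ d := by rw [mul_pow]
    simp only [hf]
    rw [neg_div]
    linarith [key, e2.symm ▸ (le_refl (M ^ (d + 1) / ((d : ℝ) + 1))), e3 ▸ key, e2]
  obtain ⟨k, hk, hfk⟩ := intermediate_value_Icc' hle hcont.continuousOn ⟨hfb, hfa⟩
  refine ⟨k, by linarith [hk.1, hd1.le], hfk, hk.1, ?_⟩
  intro k' hk' heq'
  exact uniq d hk' (by linarith [hk.1]) (eq_form d heq') (eq_form d hfk)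
end

section
/- One has min over x > 2 of sup over k > 0 of (k² + x(k + 1 - k²/2)) = 2√3 + 4, the minimum being attained at x = (2√3 + 6)/3, with the inner supremum attained at k = (√3 + 3)/√3 = 1 + √3. -/
theorem stmt_7 :
    (∀ x : ℝ, 2 < x →
      2 * Real.sqrt 3 + 4 ≤
        sSup {v : ℝ | ∃ k : ℝ, 0 < k ∧ v = k ^ 2 + x * (k + 1 - k ^ 2 / 2)}) ∧
    sSup {v : ℝ | ∃ k : ℝ, 0 < k ∧
        v = k ^ 2 + ((2 * Real.sqrt 3 + 6) / 3) * (k + 1 - k ^ 2 / 2)} =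
      2 * Real.sqrt 3 + 4 ∧
    (Real.sqrt 3 + 3) / Real.sqrt 3 = 1 + Real.sqrt 3 ∧
    (1 + Real.sqrt 3) ^ 2 +
        ((2 * Real.sqrt 3 + 6) / 3) *
          ((1 + Real.sqrt 3) + 1 - (1 + Real.sqrt 3) ^ 2 / 2) =
      2 * Real.sqrt 3 + 4 := by
  have hs : Real.sqrt 3 ^ 2 = 3 := Real.sq_sqrt (by norm_num)
  have hs0 : (0:ℝ) < Real.sqrt 3 := Real.sqrt_pos.mpr (by norm_num)
  have hs3 : Real.sqrt 3 ^ 3 = 3 * Real.sqrt 3 := by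
    rw [pow_succ, hs]
  set s := Real.sqrt 3 with hsdef
  have hpart4 : (1 + s) ^ 2 + ((2 * s + 6) / 3) * ((1 + s) + 1 - (1 + s) ^ 2 / 2)
      = 2 * s + 4 := by
    field_simp
    linear_combination -2 * hs3
  refine ⟨?_, ?_, ?_, hpart4⟩
  · intro x hx
    have hd : (0:ℝ) < x - 2 := by linarith
    set k0 : ℝ := x / (x - 2) with hk0def
    have hk0 : 0 < k0 := div_pos (by linarith) hd
    set q : ℝ := x ^ 2 / (2 * (x - 2)) with hqdef
    have hq : q * (2 * (x - 2)) = x ^ 2 := by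
      rw [hqdef]; field_simp
    have hfk0 : k0 ^ 2 + x * (k0 + 1 - k0 ^ 2 / 2) = x + q := by
      rw [hk0def, hqdef]; field_simp; ring
    have hbdd : BddAbove {v : ℝ | ∃ k : ℝ, 0 < k ∧ v = k ^ 2 + x * (k + 1 - k ^ 2 / 2)} := by
      refine ⟨x + q, ?_⟩
      rintro v ⟨k, hk, rfl⟩
      nlinarith [hq, sq_nonneg (k * (x - 2) - x), hd]
    have hmem : k0 ^ 2 + x * (k0 + 1 - k0 ^ 2 / 2) ∈
        {v : ℝ | ∃ k : ℝ, 0 < k ∧ v = k ^ 2 + x * (k + 1 - k ^ 2 / 2)} := ⟨k0, hk0, rfl⟩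
    have hkey : 2 * s + 4 ≤ k0 ^ 2 + x * (k0 + 1 - k0 ^ 2 / 2) := by
      rw [hfk0]
      nlinarith [hq, sq_nonneg (3 * x - 2 * s - 6), hd, hs]
    exact hkey.trans (le_csSup hbdd hmem)
  · apply le_antisymm
    · refine csSup_le ⟨1 ^ 2 + ((2 * s + 6) / 3) * (1 + 1 - 1 ^ 2 / 2), 1, one_pos, rfl⟩ ?_
      rintro v ⟨k, hk, rfl⟩
      nlinarith [mul_nonneg hs0.le (sq_nonneg (k - 1 - s)), hs, hs3]
    · have hbdd : BddAbove {v : ℝ | ∃ k : ℝ, 0 < k ∧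
          v = k ^ 2 + ((2 * s + 6) / 3) * (k + 1 - k ^ 2 / 2)} := by
        refine ⟨2 * s + 4, ?_⟩
        rintro v ⟨k, hk, rfl⟩
        nlinarith [mul_nonneg hs0.le (sq_nonneg (k - 1 - s)), hs, hs3]
      have hmem : (2 * s + 4 : ℝ) ∈ {v : ℝ | ∃ k : ℝ, 0 < k ∧
          v = k ^ 2 + ((2 * s + 6) / 3) * (k + 1 - k ^ 2 / 2)} :=
        ⟨1 + s, by linarith, hpart4.symm⟩
      exact le_csSup hbdd hmem
  · rw [div_eq_iff hs0.ne']
    linear_combination -hs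
end

section
/- For a natural number i ≥ 1, define g_i : (0,1) → ℝ by g_i(λ) = (λ + (1-λ) (1/2)^{i+1}) / ((1/2 + λ/2)^{i+1}). Then g_i attains its maximum on (0,1) at λ*_i = (2^{i+1} - i - 2)/(i·2^{i+1} - i), and the maximum value equals i^i (2^{i+1} - 1)^{i+1} / (2^i (i+1)^{i+1} (2^i - 1)^i). -/
theorem stmt_9 (i : ℕ) (hi : 1 ≤ i) :
    let g : ℝ → ℝ := fun lam =>
      (lam + (1 - lam) * (1 / 2) ^ (i + 1)) / ((1 / 2 + lam / 2) ^ (i + 1))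
    let lamStar : ℝ := (2 ^ (i + 1) - (i : ℝ) - 2) / ((i : ℝ) * 2 ^ (i + 1) - i)
    lamStar ∈ Set.Ioo (0 : ℝ) 1 ∧
    g lamStar =
      (i : ℝ) ^ i * (2 ^ (i + 1) - 1) ^ (i + 1) /
        (2 ^ i * ((i : ℝ) + 1) ^ (i + 1) * (2 ^ i - 1) ^ i) ∧
    ∀ lam ∈ Set.Ioo (0 : ℝ) 1, g lam ≤ g lamStar := by
  intro g lamStar
  have hg : ∀ x : ℝ, g x =
      (x + (1 - x) * (1 / 2) ^ (i + 1)) / ((1 / 2 + x / 2) ^ (i + 1)) := fun _ => rfl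
  have hi' : (1:ℝ) ≤ (i:ℝ) := by exact_mod_cast hi
  set p : ℝ := (2:ℝ) ^ i with hpdef
  have hp2 : (2:ℝ) ≤ p := by
    rw [hpdef]
    calc (2:ℝ) = 2 ^ 1 := by norm_num
    _ ≤ 2 ^ i := by exact pow_le_pow_right₀ (by norm_num) hi
  have hip : (i:ℝ) < p := by rw [hpdef]; exact_mod_cast Nat.lt_two_pow_self (n := i)
  have hpow : (2:ℝ) ^ (i+1) = 2 * p := by rw [hpdef, pow_succ]; ring
  have hpow2 : ((1:ℝ)/2) ^ (i+1) = 1 / (2 * p) := by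
    rw [div_pow, one_pow, hpow]
  have hL : lamStar = (2 * p - (i:ℝ) - 2) / ((i:ℝ) * (2 * p) - i) := by
    rw [show lamStar = (2 ^ (i + 1) - (i : ℝ) - 2) / ((i : ℝ) * 2 ^ (i + 1) - i) from rfl, hpow]
  have hine : (0:ℝ) < i := by linarith
  have hnum : (0:ℝ) < 2 * p - (i:ℝ) - 2 := by linarith
  have hden : (0:ℝ) < (i:ℝ) * (2 * p) - i := by nlinarith
  have hLpos : 0 < lamStar := by rw [hL]; positivity
  have hL1 : lamStar < 1 := by
    rw [hL, div_lt_one hden]; nlinarith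
  have hip0 : (i:ℝ) ≠ 0 := ne_of_gt hine
  have hp0 : p ≠ 0 := by intro h; rw [h] at hp2; norm_num at hp2
  have hp1 : p - 1 ≠ 0 := by intro h; nlinarith
  have h2p1 : 2 * p - 1 ≠ 0 := by intro h; nlinarith
  have hi1 : (i:ℝ) + 1 ≠ 0 := by intro h; nlinarith
  have hden' : (i:ℝ) * (2 * p) - i ≠ 0 := hden.ne'
  have hNstar : lamStar + (1 - lamStar) * (1/2) ^ (i+1) = (p - 1) / ((i:ℝ) * p) := by
    rw [hL, hpow2]
    field_simp
    ring
  have hSstar : 1/2 + lamStar/2 = ((i:ℝ) + 1) * (p - 1) / ((i:ℝ) * (2 * p - 1)) := by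
    rw [hL]
    field_simp
    ring
  have hSpos : 0 < (1:ℝ)/2 + lamStar/2 := by linarith
  refine ⟨⟨hLpos, hL1⟩, ?_, ?_⟩
  · rw [hg, hNstar, hSstar, div_pow, mul_pow, mul_pow, hpow]
    have e1 : ((i:ℝ)) ^ (i+1) ≠ 0 := pow_ne_zero _ hip0
    have e2 : ((i:ℝ) + 1) ^ (i+1) ≠ 0 := pow_ne_zero _ hi1
    have e3 : (p - 1) ^ (i+1) ≠ 0 := pow_ne_zero _ hp1
    have e4 : (2 * p - 1) ^ (i+1) ≠ 0 := pow_ne_zero _ h2p1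
    have e5 : (p - 1) ^ i ≠ 0 := pow_ne_zero _ hp1
    field_simp
    ring
  · intro lam hlam
    obtain ⟨h0, h1⟩ := hlam
    set a : ℝ := (lam - lamStar) / (1 + lamStar) with hadef
    have h1L : (0:ℝ) < 1 + lamStar := by linarith
    have ha : -1 < a := by
      rw [hadef, lt_div_iff₀ h1L]; nlinarith
    have hB : 1 + ((i:ℝ)+1) * a ≤ (1 + a) ^ (i+1) := by
      have := one_add_mul_le_pow (a := a) (by linarith) (i+1)
      push_cast at this
      linarith
    have hN : lam + (1 - lam) * (1/2) ^ (i+1) =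
        ((p - 1) / ((i:ℝ) * p)) * (1 + ((i:ℝ)+1) * a) := by
      rw [hadef, hL, hpow2]
      have hs : (0:ℝ) < 1 + (2 * p - (i:ℝ) - 2) / ((i:ℝ) * (2 * p) - i) := by
        positivity
      have hs2 : (i:ℝ) * (2 * p - 1) + (2 * p - (i:ℝ) - 2) ≠ 0 := by nlinarith
      field_simp
      ring
    have hDbase : 1/2 + lam/2 = (1/2 + lamStar/2) * (1 + a) := by
      rw [hadef]
      field_simp
      ring
    have hD : (1/2 + lam/2) ^ (i+1) = (1/2 + lamStar/2) ^ (i+1) * (1 + a) ^ (i+1) := by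
      rw [hDbase, mul_pow]
    have hDstarpos : 0 < ((1:ℝ)/2 + lamStar/2) ^ (i+1) := pow_pos hSpos _
    have hapos : 0 < (1 + a) ^ (i+1) := pow_pos (by linarith) _
    have hDpos : 0 < ((1:ℝ)/2 + lam/2) ^ (i+1) := pow_pos (by linarith) _
    rw [hg, hg, div_le_div_iff₀ hDpos hDstarpos, hNstar, hN, hD]
    have hNspos : 0 < (p - 1) / ((i:ℝ) * p) := by
      apply div_pos (by linarith) (by positivity)
    calc (p - 1) / ((i:ℝ) * p) * (1 + ((i:ℝ)+1) * a) * ((1/2 + lamStar/2) ^ (i+1))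
        ≤ (p - 1) / ((i:ℝ) * p) * ((1 + a) ^ (i+1)) * ((1/2 + lamStar/2) ^ (i+1)) := by
          apply mul_le_mul_of_nonneg_right _ hDstarpos.le
          exact mul_le_mul_of_nonneg_left hB hNspos.le
      _ = (p - 1) / ((i:ℝ) * p) * ((1/2 + lamStar/2) ^ (i+1) * (1 + a) ^ (i+1)) := by ring
end

section
/- Define M_i := i^i (2^{i+1} - 1)^{i+1} / (2^i (i+1)^{i+1} (2^i - 1)^i) for natural numbers i ≥ 1. Then the sequence (M_i) is non-decreasing: M_{i+1} ≥ M_i for all i ≥ 1. -/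
lemma aux_nat_pow (i : ℕ) (hi : 1 ≤ i) : i ^ 2 + 2 * i + 5 ≤ 2 ^ (i + 2) := by
  induction i, hi using Nat.le_induction with
  | base => norm_num
  | succ n hn ih =>
    have h1 : 2 * n + 3 ≤ 2 ^ (n + 2) :=
      le_trans (le_trans (by omega : 2 * n + 3 ≤ 2 * n + 5) (Nat.le_add_left _ _)) ih
    calc (n + 1) ^ 2 + 2 * (n + 1) + 5 = (n ^ 2 + 2 * n + 5) + (2 * n + 3) := by ring
      _ ≤ 2 ^ (n + 2) + 2 ^ (n + 2) := Nat.add_le_add ih h1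
      _ = 2 ^ (n + 1 + 2) := by ring

theorem stmt_11 (i : ℕ) (hi : 1 ≤ i) :
    (i : ℝ) ^ i * (2 ^ (i + 1) - 1) ^ (i + 1) /
        (2 ^ i * ((i : ℝ) + 1) ^ (i + 1) * (2 ^ i - 1) ^ i) ≤
      ((i : ℝ) + 1) ^ (i + 1) * (2 ^ (i + 2) - 1) ^ (i + 2) /
        (2 ^ (i + 1) * ((i : ℝ) + 2) ^ (i + 2) * (2 ^ (i + 1) - 1) ^ (i + 1)) := by
  rcases Nat.lt_or_ge i 2 with h2 | h2
  · have hi1 : i = 1 := by omega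
    subst hi1
    norm_num
  · -- i ≥ 2
    have hx2 : (2 : ℝ) ≤ (i : ℝ) := by exact_mod_cast h2
    have hA4 : (4 : ℝ) ≤ 2 ^ i := by
      calc (4 : ℝ) = 2 ^ 2 := by norm_num
        _ ≤ 2 ^ i := pow_le_pow_right₀ (by norm_num) h2
    set x : ℝ := (i : ℝ) with hx
    set A : ℝ := (2 : ℝ) ^ i with hA
    have e1 : (2 : ℝ) ^ (i + 1) = 2 * A := by rw [hA, pow_succ]; ring
    have e2 : (2 : ℝ) ^ (i + 2) = 4 * A := by rw [hA, pow_succ, pow_succ]; ring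
    have hApos : (0 : ℝ) < A := by linarith
    have hA1 : (0 : ℝ) < A - 1 := by linarith
    have h2A1 : (0 : ℝ) < 2 * A - 1 := by linarith
    have h4A1 : (0 : ℝ) < 4 * A - 1 := by linarith
    have hxpos : (0 : ℝ) < x := by linarith
    have hnat : x ^ 2 + 2 * x + 5 ≤ 4 * A := by
      have := aux_nat_pow i hi
      have hcast : ((i : ℝ)) ^ 2 + 2 * (i : ℝ) + 5 ≤ (2 : ℝ) ^ (i + 2) := by
        exact_mod_cast this
      calc x ^ 2 + 2 * x + 5 ≤ (2 : ℝ) ^ (i + 2) := hcast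
        _ = 4 * A := e2
    have d1 : (0 : ℝ) < 2 ^ i * (x + 1) ^ (i + 1) * (2 ^ i - 1) ^ i := by
      refine mul_pos (mul_pos ?_ ?_) ?_
      · exact pow_pos two_pos i
      · exact pow_pos (by linarith) _
      · exact pow_pos (by rw [← hA]; linarith) i
    have d2 : (0 : ℝ) < 2 ^ (i + 1) * (x + 2) ^ (i + 2) * (2 ^ (i + 1) - 1) ^ (i + 1) := by
      refine mul_pos (mul_pos ?_ ?_) ?_
      · exact pow_pos two_pos _
      · exact pow_pos (by linarith) _
      · exact pow_pos (by rw [e1]; linarith) _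
    rw [div_le_div_iff₀ d1 d2]
    rw [e1, e2]
    -- key base inequality 1
    have base1 : x * (x + 2) * (2 * A - 1) ^ 2 ≤ (x + 1) ^ 2 * ((4 * A - 1) * (A - 1)) := by
      nlinarith [mul_nonneg hApos.le (by linarith : (0:ℝ) ≤ 4 * A - (x ^ 2 + 2 * x + 5))]
    have key1 : x ^ i * (x + 2) ^ i * (2 * A - 1) ^ (2 * i) ≤
        (x + 1) ^ (2 * i) * ((4 * A - 1) ^ i * (A - 1) ^ i) := by
      have h := pow_le_pow_left₀ (by positivity : (0:ℝ) ≤ x * (x + 2) * (2 * A - 1) ^ 2)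
        base1 i
      rw [mul_pow, mul_pow, mul_pow, mul_pow, ← pow_mul, ← pow_mul] at h
      exact h
    have b1 : 2 * (x + 2) ^ 2 ≤ 4 * (x + 1) ^ 2 := by nlinarith
    have b2 : 4 * (2 * A - 1) ^ 2 ≤ (4 * A - 1) ^ 2 := by nlinarith
    have key2 : 2 * (x + 2) ^ 2 * (2 * A - 1) ^ 2 ≤ (x + 1) ^ 2 * (4 * A - 1) ^ 2 := by
      calc 2 * (x + 2) ^ 2 * (2 * A - 1) ^ 2 ≤ 4 * (x + 1) ^ 2 * (2 * A - 1) ^ 2 :=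
            mul_le_mul_of_nonneg_right b1 (sq_nonneg _)
        _ = (x + 1) ^ 2 * (4 * (2 * A - 1) ^ 2) := by ring
        _ ≤ (x + 1) ^ 2 * (4 * A - 1) ^ 2 := mul_le_mul_of_nonneg_left b2 (sq_nonneg _)
    have key := mul_le_mul key1 key2 (by positivity) (by positivity)
    calc x ^ i * (2 * A - 1) ^ (i + 1) * (2 * A * (x + 2) ^ (i + 2) * (2 * A - 1) ^ (i + 1))
        = A * (x ^ i * (x + 2) ^ i * (2 * A - 1) ^ (2 * i) *
            (2 * (x + 2) ^ 2 * (2 * A - 1) ^ 2)) := by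
          ring
      _ ≤ A * ((x + 1) ^ (2 * i) * ((4 * A - 1) ^ i * (A - 1) ^ i) *
            ((x + 1) ^ 2 * (4 * A - 1) ^ 2)) :=
          mul_le_mul_of_nonneg_left key hApos.le
      _ = (x + 1) ^ (i + 1) * (4 * A - 1) ^ (i + 2) * (A * (x + 1) ^ (i + 1) * (A - 1) ^ i) := by
          ring
end
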